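/- For every integer j ≥ 1, a(2j+1,1) = a(2j,1); consequently ν_3(a(2j+1,1)) = ν_3(a(2j,1)) ≥ 2j+1. -/
import Mathlib


/-- The matrix `m(i,j)` of Hirschhorn: `m(i,j) = 0` whenever `i = 0` or `j = 0`
(corresponding to nonpositive indices), `m(1,1) = 9`, `m(2,1) = 6`, `m(3,1) = 1`,
`m(i,1) = 0` for `i ≥ 4`, and for `j ≥ 2`,
`m(i,j) = 27·m(i-1,j-1) + 9·m(i-2,j-1) + m(i-3,j-1)`
(truncated subtraction correctly yields the prescribed value `0` at nonpositive
first arguments). -/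
def mCoef : ℕ → ℕ → ℤ
  | _, 0 => 0
  | 0, _ => 0
  | 1, 1 => 9
  | 2, 1 => 6
  | 3, 1 => 1
  | _ + 4, 1 => 0
  | i, j + 2 => 27 * mCoef (i - 1) (j + 1) + 9 * mCoef (i - 2) (j + 1) + mCoef (i - 3) (j + 1)

/-- The matrix `a(j,k)`: `a(1,1) = 6`, `a(1,2) = 243`, `a(1,k) = 0` for `k ≥ 3`, and
`a(j+1,k) = ∑_{i≥1} a(j,i)·m(4i,i+k)` if `j` is odd, while
`a(j+1,k) = ∑_{i≥1} a(j,i)·m(4i+2,i+k)` if `j` is even.  All terms of these sums with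
`i > 3k + 3` vanish (since `m(i',j') = 0` unless `⌊(i'+2)/3⌋ ≤ j'`), so the sums may be
truncated at `i = 3k + 3`. -/
def aCoef : ℕ → ℕ → ℤ
  | 1, 1 => 6
  | 1, 2 => 243
  | j + 2, k =>
      if (j + 1) % 2 = 1 then
        ∑ i ∈ Finset.Icc 1 (3 * k + 3), aCoef (j + 1) i * mCoef (4 * i) (i + k)
      else
        ∑ i ∈ Finset.Icc 1 (3 * k + 3), aCoef (j + 1) i * mCoef (4 * i + 2) (i + k)
  | _, _ => 0

lemma mCoef_zero_left (j : ℕ) : mCoef 0 j = 0 := by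
  cases j with
  | zero => rfl
  | succ n => cases n with
    | zero => rfl
    | succ m => simp [mCoef, mCoef_zero_left]

lemma mCoef_succ (n j : ℕ) : mCoef (n+1) (j+2)
    = 27 * mCoef n (j+1) + 9 * mCoef (n-1) (j+1) + mCoef (n-2) (j+1) := by
  simp [mCoef]

lemma mCoef_eq_zero : ∀ j i, 3 * j < i → mCoef i j = 0 := by
  intro j
  induction j with
  | zero =>
    intro i _
    match i with
    | 0 => rfl
    | 1 => rfl
    | 2 => rfl
    | 3 => rfl
    | n+4 => rfl
  | succ j ih =>
    intro i hi
    match j, i, hi with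
    | 0, i, hi =>
      obtain ⟨n, rfl⟩ : ∃ n, i = n + 4 := ⟨i - 4, by omega⟩
      rfl
    | j+1, i, hi =>
      obtain ⟨n, rfl⟩ : ∃ n, i = n + 1 := ⟨i - 1, by omega⟩
      rw [mCoef_succ, ih _ (by omega), ih _ (by omega), ih _ (by omega)]
      ring

lemma mCoef_dvd : ∀ j i e : ℕ, 2*e + 3*i + 2 ≤ 9*j → (3:ℤ)^e ∣ mCoef i j := by
  intro j
  induction j with
  | zero => intro i e h; omega
  | succ j ih =>
    intro i e h
    match j, i, h with
    | 0, 0, h => simp [mCoef_zero_left]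
    | 0, 1, h =>
      have he : e ≤ 2 := by omega
      have : mCoef 1 1 = 9 := rfl
      rw [this]
      calc (3:ℤ)^e ∣ 3^2 := pow_dvd_pow 3 he
        _ = 9 := by norm_num
    | 0, 2, h =>
      have he : e = 0 := by omega
      simp [he]
    | 0, (n+3), h => omega
    | j+1, 0, h => simp [mCoef_zero_left]
    | j+1, (n+1), h =>
      rw [mCoef_succ]
      have h27 : (27:ℤ) = 3^3 := by norm_num
      have h9 : (9:ℤ) = 3^2 := by norm_num
      refine dvd_add (dvd_add ?_ ?_) ?_
      · rcases Nat.lt_or_ge e 3 with he | he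
        · exact dvd_mul_of_dvd_left (h27 ▸ pow_dvd_pow 3 he.le) _
        · obtain ⟨e1, rfl⟩ : ∃ e1, e = e1 + 3 := ⟨e - 3, by omega⟩
          rw [pow_add, h27, mul_comm ((3:ℤ)^e1)]
          exact mul_dvd_mul dvd_rfl (ih n e1 (by omega))
      · rcases Nat.lt_or_ge e 2 with he | he
        · exact dvd_mul_of_dvd_left (h9 ▸ pow_dvd_pow 3 he.le) _
        · rcases Nat.eq_zero_or_pos n with rfl | hn
          · simp [mCoef_zero_left]
          · obtain ⟨e1, rfl⟩ : ∃ e1, e = e1 + 2 := ⟨e - 2, by omega⟩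
            rw [pow_add, h9, mul_comm ((3:ℤ)^e1)]
            exact mul_dvd_mul dvd_rfl (ih (n-1) e1 (by omega))
      · rcases Nat.lt_or_ge n 2 with hn | hn
        · have : n - 2 = 0 := by omega
          simp [this, mCoef_zero_left]
        · exact ih (n-2) e (by omega)

lemma aCoef_one_eq_zero (k : ℕ) : aCoef 1 (k+3) = 0 := rfl

lemma aCoef_succ (j k : ℕ) : aCoef (j+2) k = if (j + 1) % 2 = 1 then
        ∑ i ∈ Finset.Icc 1 (3 * k + 3), aCoef (j + 1) i * mCoef (4 * i) (i + k)
      else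
        ∑ i ∈ Finset.Icc 1 (3 * k + 3), aCoef (j + 1) i * mCoef (4 * i + 2) (i + k) := by
  simp [aCoef]

lemma aCoef_dvd : ∀ j, 1 ≤ j → ∀ k : ℕ, (3:ℤ)^(j + 3*k + (1 - j % 2)) ∣ aCoef j (k+1) := by
  intro j hj
  induction j, hj using Nat.le_induction with
  | base =>
    intro k
    match k with
    | 0 => norm_num [show aCoef 1 1 = 6 from rfl]
    | 1 =>
      have : aCoef 1 2 = 243 := rfl
      rw [this]
      norm_num
    | (k+2) => simp [aCoef_one_eq_zero]
  | succ n hn ih =>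
    intro k
    obtain ⟨m, rfl⟩ : ∃ m, n = m + 1 := ⟨n - 1, by omega⟩
    rw [show m + 1 + 1 = m + 2 from rfl, aCoef_succ]
    by_cases hp : (m + 1) % 2 = 1
    · rw [if_pos hp]
      have hT : m + 2 + 3*k + (1 - (m+2) % 2) = m + 3*k + 3 := by omega
      rw [hT]
      apply Finset.dvd_sum
      intro i hi
      simp only [Finset.mem_Icc] at hi
      obtain ⟨i', rfl⟩ : ∃ i', i = i' + 1 := ⟨i - 1, by omega⟩
      have hA := ih i'
      rw [show m + 1 + 3*i' + (1 - (m+1) % 2) = m + 1 + 3*i' from by omega] at hA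
      rcases Nat.lt_or_ge k i' with hik | hik
      · exact dvd_mul_of_dvd_left ((pow_dvd_pow 3 (by omega)).trans hA) _
      · have he : m + 3*k + 3 = (m + 1 + 3*i') + (3*k + 2 - 3*i') := by omega
        rw [he, pow_add]
        refine mul_dvd_mul hA (mCoef_dvd _ _ _ ?_)
        omega
    · rw [if_neg hp]
      have hT : m + 2 + 3*k + (1 - (m+2) % 2) = m + 3*k + 2 := by omega
      rw [hT]
      apply Finset.dvd_sum
      intro i hi
      simp only [Finset.mem_Icc] at hi
      obtain ⟨i', rfl⟩ : ∃ i', i = i' + 1 := ⟨i - 1, by omega⟩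
      have hA := ih i'
      rw [show m + 1 + 3*i' + (1 - (m+1) % 2) = m + 3*i' + 2 from by omega] at hA
      rcases Nat.lt_or_ge i' k with hik | hik
      · have he : m + 3*k + 2 = (m + 3*i' + 2) + (3*k - 3*i') := by omega
        rw [he, pow_add]
        refine mul_dvd_mul hA (mCoef_dvd _ _ _ ?_)
        omega
      · exact dvd_mul_of_dvd_left ((pow_dvd_pow 3 (by omega)).trans hA) _

/-- `a(2j+1,1) = a(2j,1)` for every `j ≥ 1`; consequently
`ν₃(a(2j+1,1)) = ν₃(a(2j,1)) ≥ 2j + 1`, i.e. `3 ^ (2j+1)` divides the common value. -/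
theorem aCoef_first_column (j : ℕ) (hj : 1 ≤ j) :
    aCoef (2 * j + 1) 1 = aCoef (2 * j) 1 ∧ (3 : ℤ) ^ (2 * j + 1) ∣ aCoef (2 * j) 1 := by
  constructor
  · obtain ⟨t, rfl⟩ : ∃ t, j = t + 1 := ⟨j - 1, by omega⟩
    rw [show 2 * (t+1) + 1 = (2*t+1) + 2 from by ring, aCoef_succ,
      if_neg (by omega)]
    rw [Finset.sum_eq_single 1]
    · rw [show (2*t+1)+1 = 2*(t+1) from by ring]
      norm_num [show mCoef 6 2 = 1 from by decide]
    · intro b hb hb1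
      simp only [Finset.mem_Icc] at hb
      rw [mCoef_eq_zero _ _ (by omega), mul_zero]
    · intro h
      simp at h
  · have := aCoef_dvd (2*j) (by omega) 0
    rw [show 2*j + 3*0 + (1 - (2*j) % 2) = 2*j + 1 from by omega] at this
    exact this
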